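/- Let d ≥ 1, h > 0, and let χ : ℝ^d → {0,1} be measurable and Lebesgue integrable. Define u* : ℝ^d → {0,1} as the indicator function of the set { x ∈ ℝ^d : (G_h ⋆ χ)(x) > 1/2 } (this set has finite Lebesgue measure, so u* is integrable). Then for every measurable integrable u : ℝ^d → [0,1]: ∫_{ℝ^d} (G_{h/2} ⋆ (u* − χ))² dx + ∫_{ℝ^d} u* dx − ∫_{ℝ^d} u*·(G_h ⋆ u*) dx ≤ ∫_{ℝ^d} (G_{h/2} ⋆ (u − χ))² dx + ∫_{ℝ^d} u dx − ∫_{ℝ^d} u·(G_h ⋆ u) dx. In other words, the thresholding step minimizes the functional u ↦ (1/(2h))·d_h²(u,χ) + E_h(u) of the associated minimizing movements scheme. -/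

import Mathlib

open MeasureTheory Real Filter

/-- The Gaussian heat kernel `G_h(z) = (2πh)^{-d/2} exp(-|z|²/(2h))` on `ℝ^d`. -/
noncomputable def gauss (d : ℕ) (h : ℝ) (z : EuclideanSpace ℝ (Fin d)) : ℝ :=
  (2 * Real.pi * h) ^ (-(d : ℝ) / 2) * Real.exp (-‖z‖ ^ 2 / (2 * h))

/-- Convolution of two functions on `ℝ^d` w.r.t. Lebesgue measure. -/
noncomputable def conv (d : ℕ) (f g : EuclideanSpace ℝ (Fin d) → ℝ)
    (x : EuclideanSpace ℝ (Fin d)) : ℝ :=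
  ∫ y, f (x - y) * g y

section
variable {d : ℕ} {h t : ℝ}

lemma gauss_nonneg (hh : 0 < h) (z : EuclideanSpace ℝ (Fin d)) : 0 ≤ gauss d h z := by
  unfold gauss; positivity

lemma gauss_le (hh : 0 < h) (z : EuclideanSpace ℝ (Fin d)) :
    gauss d h z ≤ (2 * Real.pi * h) ^ (-(d : ℝ) / 2) := by
  unfold gauss
  have h1 : Real.exp (-‖z‖ ^ 2 / (2 * h)) ≤ 1 := by
    rw [Real.exp_le_one_iff]
    have : (0:ℝ) ≤ ‖z‖ ^ 2 := by positivity
    have : (0:ℝ) < 2 * h := by linarith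
    rw [div_nonpos_iff]; right; constructor <;> nlinarith [sq_nonneg ‖z‖]
  calc (2 * Real.pi * h) ^ (-(d : ℝ) / 2) * Real.exp (-‖z‖ ^ 2 / (2 * h))
      ≤ (2 * Real.pi * h) ^ (-(d : ℝ) / 2) * 1 := by
        apply mul_le_mul_of_nonneg_left h1; positivity
    _ = _ := mul_one _

lemma gauss_continuous (hh : 0 < h) : Continuous (gauss d h) := by
  unfold gauss
  exact continuous_const.mul (Real.continuous_exp.comp (by fun_prop))

lemma gauss_neg (z : EuclideanSpace ℝ (Fin d)) : gauss d h (-z) = gauss d h z := by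
  simp [gauss]

lemma gauss_sub_comm (x y : EuclideanSpace ℝ (Fin d)) : gauss d h (x - y) = gauss d h (y - x) := by
  rw [← gauss_neg (y - x), neg_sub]

lemma integrable_rexp_neg_norm_sq {b : ℝ} (hb : 0 < b) :
    Integrable (fun z : EuclideanSpace ℝ (Fin d) => Real.exp (-b * ‖z‖ ^ 2)) := by
  have := (GaussianFourier.integrable_cexp_neg_mul_sq_norm_add (V := EuclideanSpace ℝ (Fin d))
    (b := (b : ℂ)) (by simpa using hb) 0 0).norm
  refine this.congr ?_
  filter_upwards with z
  simp [Complex.norm_exp]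
  left; norm_cast

lemma gauss_integrable (hh : 0 < h) : Integrable (gauss d h) := by
  unfold gauss
  refine Integrable.const_mul ?_ _
  have hb : 0 < 1 / (2 * h) := by positivity
  refine (integrable_rexp_neg_norm_sq hb).congr ?_
  filter_upwards with z
  congr 1
  field_simp

lemma integral_gauss (hh : 0 < h) : ∫ z : EuclideanSpace ℝ (Fin d), gauss d h z = 1 := by
  unfold gauss
  rw [integral_const_mul]
  have hb : 0 < 1 / (2 * h) := by positivity
  have := GaussianFourier.integral_rexp_neg_mul_sq_norm (V := EuclideanSpace ℝ (Fin d)) hb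
  rw [finrank_euclideanSpace_fin] at this
  have heq : ∀ z : EuclideanSpace ℝ (Fin d),
      Real.exp (-‖z‖ ^ 2 / (2 * h)) = Real.exp (-(1 / (2 * h)) * ‖z‖ ^ 2) := by
    intro z; congr 1; field_simp
  simp_rw [heq, this]
  have hA : (0:ℝ) < 2 * Real.pi * h := by positivity
  have h2 : Real.pi / (1 / (2 * h)) = 2 * Real.pi * h := by field_simp
  rw [h2, ← Real.rpow_add hA, neg_div, neg_add_cancel, Real.rpow_zero]

lemma norm_helper (x y z : EuclideanSpace ℝ (Fin d)) :
    ‖x - y‖ ^ 2 + ‖y - z‖ ^ 2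
      = ‖x - z‖ ^ 2 / 2 + 2 * ‖y - (2:ℝ)⁻¹ • (x + z)‖ ^ 2 := by
  have hp := parallelogram_law_with_norm ℝ (x - y) (y - z)
  have h1 : (x - y) + (y - z) = x - z := by abel
  have h2 : (x - y) - (y - z) = (2:ℝ) • ((2:ℝ)⁻¹ • (x + z) - y) := by
    rw [smul_sub, smul_smul]
    norm_num
    module
  rw [h1, h2, norm_smul] at hp
  rw [← norm_sub_rev ((2:ℝ)⁻¹ • (x + z)) y]
  simp only [Real.norm_ofNat] at hp
  nlinarith [hp]

lemma gauss_mul (hh : 0 < h) (a b : EuclideanSpace ℝ (Fin d)) :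
    gauss d (h/2) a * gauss d (h/2) b
      = (Real.pi * h) ^ (-(d:ℝ)) * Real.exp (-(‖a‖^2 + ‖b‖^2) / h) := by
  unfold gauss
  have h1 : 2 * Real.pi * (h/2) = Real.pi * h := by ring
  rw [h1, mul_mul_mul_comm, ← Real.exp_add, ← Real.rpow_add (by positivity)]
  congr 1
  · congr 1; ring
  · congr 1; field_simp; ring

lemma gauss_conv_gauss (hh : 0 < h) (x z : EuclideanSpace ℝ (Fin d)) :
    (∫ y : EuclideanSpace ℝ (Fin d), gauss d (h/2) (x - y) * gauss d (h/2) (y - z))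
      = gauss d h (x - z) := by
  set m : EuclideanSpace ℝ (Fin d) := (2:ℝ)⁻¹ • (x + z) with hm
  have hb : (0:ℝ) < 2 / h := by positivity
  have key : ∀ y : EuclideanSpace ℝ (Fin d),
      gauss d (h/2) (x - y) * gauss d (h/2) (y - z)
        = (gauss d h (x - z) * (Real.pi * (h/2)) ^ (-(d:ℝ)/2))
            * Real.exp (-(2/h) * ‖y - m‖ ^ 2) := by
    intro y
    rw [gauss_mul hh, norm_helper x y z]
    unfold gauss
    have rearr : ∀ (a b c e : ℝ), a * b * c * e = a * c * (b * e) := fun a b c e => by ring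
    conv_rhs => rw [rearr, ← Real.exp_add]
    congr 1
    · rw [← Real.mul_rpow (by positivity) (by positivity)]
      have : 2 * Real.pi * h * (Real.pi * (h/2)) = (Real.pi * h) ^ (2:ℕ) := by ring
      rw [show (-(d:ℝ)/2) = (-(d:ℝ))/2 by ring, this, ← Real.rpow_natCast (Real.pi * h) 2,
        ← Real.rpow_mul (by positivity)]
      congr 1
      ring
    · congr 1
      rw [← hm]
      field_simp
      ring
  simp_rw [key]
  rw [integral_const_mul]
  have htr : (∫ y : EuclideanSpace ℝ (Fin d), Real.exp (-(2/h) * ‖y - m‖ ^ 2))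
      = ∫ y : EuclideanSpace ℝ (Fin d), Real.exp (-(2/h) * ‖y‖ ^ 2) := by
    exact integral_sub_right_eq_self (fun y => Real.exp (-(2/h) * ‖y‖ ^ 2)) m
  rw [htr, GaussianFourier.integral_rexp_neg_mul_sq_norm hb, finrank_euclideanSpace_fin]
  have h2 : Real.pi / (2 / h) = Real.pi * (h/2) := by field_simp
  rw [h2, mul_assoc, ← Real.rpow_add (by positivity), neg_div, neg_add_cancel,
    Real.rpow_zero, mul_one]

lemma gauss_abs_le (hh : 0 < t) (z : EuclideanSpace ℝ (Fin d)) :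
    ‖gauss d t z‖ ≤ (2 * Real.pi * t) ^ (-(d : ℝ) / 2) := by
  rw [Real.norm_eq_abs, abs_of_nonneg (gauss_nonneg hh z)]
  exact gauss_le hh z

/-- C1 : integrand of conv is integrable -/
lemma conv_integrand_integrable (hh : 0 < t) {g : EuclideanSpace ℝ (Fin d) → ℝ}
    (hg : Measurable g) (hgi : Integrable g) (x : EuclideanSpace ℝ (Fin d)) :
    Integrable (fun y => gauss d t (x - y) * g y) := by
  refine hgi.bdd_mul (c := (2 * Real.pi * t) ^ (-(d : ℝ) / 2)) ?_ (Eventually.of_forall fun y => gauss_abs_le hh _)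
  exact ((gauss_continuous hh).comp (continuous_const.sub continuous_id)).aestronglyMeasurable

/-- C2 : conv with gauss kernel is measurable -/
lemma conv_stronglyMeasurable (hh : 0 < t) {g : EuclideanSpace ℝ (Fin d) → ℝ}
    (hg : Measurable g) :
    StronglyMeasurable (conv d (gauss d t) g) := by
  have hF : StronglyMeasurable (fun p : EuclideanSpace ℝ (Fin d) × EuclideanSpace ℝ (Fin d) =>
      gauss d t (p.1 - p.2) * g p.2) := by
    apply Measurable.stronglyMeasurable
    exact (((gauss_continuous hh).measurable).comp (measurable_fst.sub measurable_snd)).mul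
      (hg.comp measurable_snd)
  exact hF.integral_prod_right'

/-- C3 : conv with gauss kernel is bounded -/
lemma conv_bound (hh : 0 < t) {g : EuclideanSpace ℝ (Fin d) → ℝ}
    (hg : Measurable g) (hgi : Integrable g) (x : EuclideanSpace ℝ (Fin d)) :
    ‖conv d (gauss d t) g x‖ ≤ (2 * Real.pi * t) ^ (-(d : ℝ) / 2) * ∫ y, ‖g y‖ := by
  unfold conv
  calc ‖∫ y, gauss d t (x - y) * g y‖ ≤ ∫ y, ‖gauss d t (x - y) * g y‖ :=
        norm_integral_le_integral_norm _
    _ ≤ ∫ y, (2 * Real.pi * t) ^ (-(d : ℝ) / 2) * ‖g y‖ := by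
        apply integral_mono_of_nonneg (Eventually.of_forall fun y => norm_nonneg _)
          (hgi.norm.const_mul _)
        filter_upwards with y
        rw [norm_mul]
        exact mul_le_mul_of_nonneg_right (gauss_abs_le hh _) (norm_nonneg _)
    _ = _ := integral_const_mul _ _

/-- C4 : product-space integrability -/
lemma prod_integrable (hh : 0 < t) {f g : EuclideanSpace ℝ (Fin d) → ℝ} {C : ℝ}
    (hf : Measurable f) (hfC : ∀ x, ‖f x‖ ≤ C)
    (hg : Measurable g) (hgi : Integrable g) :
    Integrable (fun p : EuclideanSpace ℝ (Fin d) × EuclideanSpace ℝ (Fin d) =>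
      f p.1 * (gauss d t (p.1 - p.2) * g p.2)) := by
  have hker : Integrable (fun p : EuclideanSpace ℝ (Fin d) × EuclideanSpace ℝ (Fin d) =>
      gauss d t (p.1 - p.2) * g p.2) := by
    have := Integrable.convolution_integrand ((ContinuousLinearMap.mul ℝ ℝ).flip)
      hgi (gauss_integrable hh)
    exact this.congr (Eventually.of_forall fun p => by
      simp [ContinuousLinearMap.flip_apply, ContinuousLinearMap.mul_apply', mul_comm])
  exact hker.bdd_mul ((hf.comp measurable_fst).aestronglyMeasurable) (Eventually.of_forall fun p => hfC _)

/-- main Fubini lemma -/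
lemma fubini_conv (hh : 0 < t) {f g : EuclideanSpace ℝ (Fin d) → ℝ} {C : ℝ}
    (hf : Measurable f) (hfC : ∀ x, ‖f x‖ ≤ C)
    (hg : Measurable g) (hgi : Integrable g) :
    ∫ x, f x * conv d (gauss d t) g x = ∫ y, g y * conv d (gauss d t) f y := by
  have h1 : ∫ x, f x * conv d (gauss d t) g x
      = ∫ x, ∫ y, f x * (gauss d t (x - y) * g y) := by
    unfold conv
    congr 1 with x
    rw [integral_const_mul]
  rw [h1, integral_integral_swap (by exact prod_integrable hh hf hfC hg hgi)]
  congr 1 with y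
  have h2 : ∀ x, f x * (gauss d t (x - y) * g y) = (gauss d t (y - x) * f x) * g y := by
    intro x
    rw [gauss_sub_comm x y]
    ring
  simp_rw [h2]
  rw [integral_mul_const, mul_comm]
  rfl

/-- squared-convolution identity: `∫ (G_{h/2} ⋆ f)² = ∫ f ⋅ (G_h ⋆ f)` -/
lemma sq_conv (hh : 0 < h) {f : EuclideanSpace ℝ (Fin d) → ℝ}
    (hf : Measurable f) (hfC : ∀ x, ‖f x‖ ≤ 1) (hfi : Integrable f) :
    ∫ x, (conv d (gauss d (h/2)) f x) ^ 2 = ∫ y, f y * conv d (gauss d h) f y := by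
  have hh2 : 0 < h / 2 := by linarith
  set ψ := conv d (gauss d (h/2)) f with hψ
  have hψm : Measurable ψ := (conv_stronglyMeasurable hh2 hf).measurable
  have hψC : ∀ x, ‖ψ x‖ ≤ (2 * Real.pi * (h/2)) ^ (-(d:ℝ)/2) * ∫ y, ‖f y‖ :=
    fun x => conv_bound hh2 hf hfi x
  have step1 : ∫ x, ψ x * conv d (gauss d (h/2)) f x
      = ∫ y, f y * conv d (gauss d (h/2)) ψ y :=
    fubini_conv hh2 hψm hψC hf hfi
  have step2 : ∀ y, conv d (gauss d (h/2)) ψ y = conv d (gauss d h) f y := by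
    intro y
    have hGm : Measurable (fun x : EuclideanSpace ℝ (Fin d) => gauss d (h/2) (y - x)) :=
      ((gauss_continuous hh2).measurable).comp (measurable_const.sub measurable_id)
    have hGC : ∀ x : EuclideanSpace ℝ (Fin d),
        ‖gauss d (h/2) (y - x)‖ ≤ (2 * Real.pi * (h/2)) ^ (-(d:ℝ)/2) :=
      fun x => gauss_abs_le hh2 _
    have hfub := fubini_conv hh2 hGm hGC hf hfi
    have lhs_eq : conv d (gauss d (h/2)) ψ y
        = ∫ x, gauss d (h/2) (y - x) * conv d (gauss d (h/2)) f x := rfl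
    rw [lhs_eq, hfub]
    have inner_eq : ∀ z, conv d (gauss d (h/2)) (fun x => gauss d (h/2) (y - x)) z
        = gauss d h (z - y) := by
      intro z
      have : ∀ w, gauss d (h/2) (z - w) * gauss d (h/2) (y - w)
          = gauss d (h/2) (z - w) * gauss d (h/2) (w - y) := by
        intro w; rw [gauss_sub_comm y w]
      unfold conv
      rw [show (∫ w, gauss d (h/2) (z - w) * gauss d (h/2) (y - w))
          = ∫ w, gauss d (h/2) (z - w) * gauss d (h/2) (w - y) from by simp_rw [this]]
      exact gauss_conv_gauss hh z y
    simp_rw [inner_eq]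
    unfold conv
    congr 1 with z
    rw [gauss_sub_comm z y]
    ring
  have sq_eq : ∀ x, (conv d (gauss d (h/2)) f x) ^ 2 = ψ x * conv d (gauss d (h/2)) f x := by
    intro x; rw [hψ]; ring
  simp only [← hψ] at sq_eq step1
  simp_rw [sq_eq, step1, step2]

/-- integrability of `v ⋅ (G ⋆ w)` -/
lemma mul_conv_integrable (hh : 0 < h) {v w : EuclideanSpace ℝ (Fin d) → ℝ}
    (hvm : Measurable v) (hvi : Integrable v)
    (hwm : Measurable w) (hwi : Integrable w) :
    Integrable (fun y => v y * conv d (gauss d h) w y) := by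
  have := (Integrable.bdd_mul (c := (2 * Real.pi * h) ^ (-(d:ℝ)/2) * ∫ y, ‖w y‖)
    hvi ((conv_stronglyMeasurable hh hwm).aestronglyMeasurable)
    (by filter_upwards with y; exact conv_bound hh hwm hwi y))
  refine this.congr ?_
  filter_upwards with y
  ring

/-- the big expansion of the functional -/
lemma expansion (hh : 0 < h) {χ v : EuclideanSpace ℝ (Fin d) → ℝ}
    (hχm : Measurable χ) (hχC : ∀ x, χ x ∈ Set.Icc (0:ℝ) 1) (hχi : Integrable χ)
    (hvm : Measurable v) (hvC : ∀ x, v x ∈ Set.Icc (0:ℝ) 1) (hvi : Integrable v) :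
    (∫ x, (conv d (gauss d (h/2)) (fun y => v y - χ y) x) ^ 2)
      + (∫ x, v x) - (∫ x, v x * conv d (gauss d h) v x)
    = (∫ y, (v y - 2 * (v y * conv d (gauss d h) χ y)))
      + ∫ y, χ y * conv d (gauss d h) χ y := by
  have hdm : Measurable (fun y => v y - χ y) := hvm.sub hχm
  have hdi : Integrable (fun y => v y - χ y) := hvi.sub hχi
  have hdC : ∀ x, ‖v x - χ x‖ ≤ 1 := by
    intro x
    obtain ⟨h1, h2⟩ := hvC x
    obtain ⟨h3, h4⟩ := hχC x
    rw [Real.norm_eq_abs, abs_le]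
    constructor <;> linarith
  have hχC' : ∀ x, ‖χ x‖ ≤ 1 := by
    intro x
    obtain ⟨h3, h4⟩ := hχC x
    rw [Real.norm_eq_abs, abs_le]
    constructor <;> linarith
  rw [sq_conv hh hdm hdC hdi]
  have hconv_sub : ∀ y, conv d (gauss d h) (fun z => v z - χ z) y
      = conv d (gauss d h) v y - conv d (gauss d h) χ y := by
    intro y
    unfold conv
    rw [← integral_sub (conv_integrand_integrable hh hvm hvi y)
      (conv_integrand_integrable hh hχm hχi y)]
    congr 1 with z
    ring
  have Ivv := mul_conv_integrable hh hvm hvi hvm hvi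
  have Ivχ := mul_conv_integrable hh hvm hvi hχm hχi
  have Iχv := mul_conv_integrable hh hχm hχi hvm hvi
  have Iχχ := mul_conv_integrable hh hχm hχi hχm hχi
  have expand : ∀ y, (v y - χ y) * conv d (gauss d h) (fun z => v z - χ z) y
      = (v y * conv d (gauss d h) v y) - (v y * conv d (gauss d h) χ y)
        - (χ y * conv d (gauss d h) v y) + (χ y * conv d (gauss d h) χ y) := by
    intro y
    rw [hconv_sub y]
    ring
  simp_rw [expand]
  have I2 : Integrable (fun y => v y * conv d (gauss d h) v y
      - v y * conv d (gauss d h) χ y) := Ivv.sub Ivχ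
  have I3 : Integrable (fun y => v y * conv d (gauss d h) v y
      - v y * conv d (gauss d h) χ y - χ y * conv d (gauss d h) v y) := I2.sub Iχv
  rw [integral_add I3 Iχχ, integral_sub I2 Iχv, integral_sub Ivv Ivχ]
  have hsym : ∫ y, χ y * conv d (gauss d h) v y = ∫ y, v y * conv d (gauss d h) χ y :=
    fubini_conv hh hχm hχC' hvm hvi
  rw [hsym, integral_sub hvi (Ivχ.const_mul 2), MeasureTheory.integral_const_mul]
  ring

end

/-- The thresholding step minimizes `u ↦ (1/(2h)) d_h²(u,χ) + E_h(u)` among all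
measurable `[0,1]`-valued integrable `u`. -/
theorem stmt_7 (d : ℕ) (hd : 1 ≤ d) (h : ℝ) (hh : 0 < h)
    (χ : EuclideanSpace ℝ (Fin d) → ℝ)
    (hχ_meas : Measurable χ) (hχ_val : ∀ x, χ x = 0 ∨ χ x = 1) (hχ_int : Integrable χ)
    (ustar : EuclideanSpace ℝ (Fin d) → ℝ)
    (hustar : ustar = fun x => if 1 / 2 < conv d (gauss d h) χ x then (1 : ℝ) else 0)
    (u : EuclideanSpace ℝ (Fin d) → ℝ)
    (hu_meas : Measurable u) (hu_range : ∀ x, u x ∈ Set.Icc (0 : ℝ) 1)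
    (hu_int : Integrable u) :
    (∫ x, (conv d (gauss d (h / 2)) (fun y => ustar y - χ y) x) ^ 2)
      + (∫ x, ustar x) - (∫ x, ustar x * conv d (gauss d h) ustar x)
    ≤ (∫ x, (conv d (gauss d (h / 2)) (fun y => u y - χ y) x) ^ 2)
      + (∫ x, u x) - ∫ x, u x * conv d (gauss d h) u x := by
  have hχC : ∀ x, χ x ∈ Set.Icc (0:ℝ) 1 := by
    intro x
    rcases hχ_val x with h0 | h0 <;> simp [h0]
  have hφm : Measurable (conv d (gauss d h) χ) :=
    (conv_stronglyMeasurable hh hχ_meas).measurable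
  have hval : ∀ x, ustar x = if 1 / 2 < conv d (gauss d h) χ x then (1:ℝ) else 0 := by
    intro x; rw [hustar]
  have hsm : Measurable ustar := by
    rw [hustar]
    exact Measurable.ite (measurableSet_lt measurable_const hφm)
      measurable_const measurable_const
  have hsC : ∀ x, ustar x ∈ Set.Icc (0:ℝ) 1 := by
    intro x
    rw [hval x]
    split <;> simp
  have hφi : Integrable (conv d (gauss d h) χ) := by
    have hconv := Integrable.integrable_convolution (L := (ContinuousLinearMap.mul ℝ ℝ).flip)
      hχ_int (gauss_integrable hh)
    refine hconv.congr ?_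
    filter_upwards with x
    rw [convolution_def]
    unfold conv
    congr 1 with y
  have hSfin : volume {x | 1 / 2 < conv d (gauss d h) χ x} < ⊤ := by
    refine lt_of_le_of_lt (measure_mono ?_) (hφi.measure_ge_lt_top (ε := 1/2) (by norm_num))
    intro x hx
    simp only [Set.mem_setOf_eq] at hx ⊢
    linarith
  have hsi : Integrable ustar := by
    rw [hustar]
    have heq : (fun x => if 1 / 2 < conv d (gauss d h) χ x then (1:ℝ) else 0)
        = Set.indicator {x | 1 / 2 < conv d (gauss d h) χ x} (fun _ => 1) := by
      funext x
      simp [Set.indicator_apply, Set.mem_setOf_eq]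
    rw [heq, integrable_indicator_iff (measurableSet_lt measurable_const hφm)]
    exact integrableOn_const hSfin.ne
  rw [expansion hh hχ_meas hχC hχ_int hsm hsC hsi,
    expansion hh hχ_meas hχC hχ_int hu_meas hu_range hu_int]
  have key : (∫ y, (ustar y - 2 * (ustar y * conv d (gauss d h) χ y)))
      ≤ ∫ y, (u y - 2 * (u y * conv d (gauss d h) χ y)) := by
    apply integral_mono
    · exact hsi.sub ((mul_conv_integrable hh hsm hsi hχ_meas hχ_int).const_mul 2)
    · exact hu_int.sub ((mul_conv_integrable hh hu_meas hu_int hχ_meas hχ_int).const_mul 2)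
    · intro y
      obtain ⟨h0, h1⟩ := hu_range y
      dsimp only
      rw [hval y]
      by_cases hy : 1 / 2 < conv d (gauss d h) χ y
      · rw [if_pos hy]
        nlinarith
      · rw [if_neg hy]
        push_neg at hy
        nlinarith
  linarith [key]
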